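/- Let Ω be a compact metric space that is not finite, let T : Ω → Ω be a minimal homeomorphism, and suppose that (Ω,T) satisfies the topological repetition property (TRP), i.e., there exists a point of Ω whose forward T-orbit has the repetition property. Then there exists a residual (comeager) subset F of the space C(Ω,ℝ) of real-valued continuous functions on Ω with the uniform metric such that for every f ∈ F there is a residual subset Ω_f ⊆ Ω with the property that for every ω ∈ Ω_f, the potential V_ω : ℤ → ℝ defined by V_ω(n) = f(T^n ω) is a Gordon potential. -/

import Mathlib

open Filter Topology MeasureTheory

/-- A sequence in a metric space has the repetition property if for every `ε > 0` and
`r > 0` there is a positive integer `q` such that `dist (u k) (u (k+q)) < ε` for all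
`k = 0, 1, …, ⌊r * q⌋`. -/
def RepetitionProperty {Ω : Type*} [PseudoMetricSpace Ω] (u : ℕ → Ω) : Prop :=
  ∀ ε > (0 : ℝ), ∀ r > (0 : ℝ), ∃ q : ℕ, 0 < q ∧
    ∀ k : ℕ, k ≤ ⌊r * q⌋₊ → dist (u k) (u (k + q)) < ε

/-- `PRP T` is the set of points whose forward orbit under `T` has the repetition
property. -/
def PRP {Ω : Type*} [PseudoMetricSpace Ω] (T : Ω → Ω) : Set Ω :=
  { ω | RepetitionProperty fun k => T^[k] ω }

/-- A bounded function `V : ℤ → ℝ` is a Gordon potential if there are positive integers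
`q k → ∞` with `|V n - V (n ± q k)| ≤ k ^ (-(q k))` for all `1 ≤ n ≤ q k` and `k ≥ 1`. -/
def IsGordonPotential (V : ℤ → ℝ) : Prop :=
  (∃ M : ℝ, ∀ n : ℤ, |V n| ≤ M) ∧
  ∃ q : ℕ → ℕ, (∀ k, 0 < q k) ∧ Tendsto q atTop atTop ∧
    ∀ k : ℕ, 1 ≤ k → ∀ n : ℤ, 1 ≤ n → n ≤ (q k : ℤ) →
      |V n - V (n + q k)| ≤ ((k : ℝ) ^ q k)⁻¹ ∧
      |V n - V (n - q k)| ≤ ((k : ℝ) ^ q k)⁻¹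

section Auxiliary

variable {Ω : Type*} [MetricSpace Ω]

lemma hpow_iter (T : Ω ≃ₜ Ω) (m : ℕ) (x : Ω) : (T.toEquiv ^ m) x = T^[m] x := by
  rw [← Equiv.Perm.iterate_eq_pow]; rfl

lemma hzpow_nat (T : Ω ≃ₜ Ω) (m : ℕ) (x : Ω) : (T.toEquiv ^ (m : ℤ)) x = T^[m] x := by
  rw [zpow_natCast, hpow_iter]

lemma hzpow_cont (T : Ω ≃ₜ Ω) (n : ℤ) : Continuous fun x : Ω => (T.toEquiv ^ n) x := by
  cases n with
  | ofNat m =>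
      have : (fun x : Ω => (T.toEquiv ^ (Int.ofNat m)) x) = T^[m] := by
        funext x; rw [Int.ofNat_eq_natCast, zpow_natCast, ← Equiv.Perm.iterate_eq_pow]; rfl
      rw [this]; exact T.continuous.iterate m
  | negSucc m =>
      have : (fun x : Ω => (T.toEquiv ^ (Int.negSucc m)) x) = (T.symm)^[m+1] := by
        funext x
        rw [zpow_negSucc, ← inv_pow, ← Equiv.Perm.iterate_eq_pow]
        rfl
      rw [this]; exact T.symm.continuous.iterate (m+1)

lemma hzpow_add (T : Ω ≃ₜ Ω) (m n : ℤ) (x : Ω) :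
    (T.toEquiv ^ (m + n)) x = (T.toEquiv ^ m) ((T.toEquiv ^ n) x) := by
  rw [zpow_add, Equiv.Perm.mul_apply]

/-- The pointwise goodness predicate: `ω` sees an exact `q`-almost-period of quality
`(k^q)⁻¹` for the potential generated by `f`. -/
def goodPt (T : Ω ≃ₜ Ω) (f : C(Ω,ℝ)) (k q : ℕ) (ω : Ω) : Prop :=
  ∀ n : ℤ, 1 ≤ n → n ≤ (q:ℤ) →
    |f ((T.toEquiv^n) ω) - f ((T.toEquiv^(n+q)) ω)| < ((k:ℝ)^q)⁻¹ ∧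
    |f ((T.toEquiv^n) ω) - f ((T.toEquiv^(n-q)) ω)| < ((k:ℝ)^q)⁻¹

def setA (T : Ω ≃ₜ Ω) (k : ℕ) (V : Set Ω) : Set C(Ω,ℝ) :=
  {f | ∃ q : ℕ, k ≤ q ∧ 0 < q ∧ ∃ ω ∈ V, goodPt T f k q ω}

def setO (T : Ω ≃ₜ Ω) (f : C(Ω,ℝ)) (k : ℕ) : Set Ω :=
  {ω | ∃ q : ℕ, k ≤ q ∧ 0 < q ∧ goodPt T f k q ω}

lemma goodPt_eq_biInter (T : Ω ≃ₜ Ω) (f : C(Ω,ℝ)) (k q : ℕ) :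
    {ω | goodPt T f k q ω} = ⋂ n ∈ Finset.Icc (1:ℤ) (q:ℤ),
      ({ω | |f ((T.toEquiv^n) ω) - f ((T.toEquiv^(n+(q:ℤ))) ω)| < ((k:ℝ)^q)⁻¹} ∩
       {ω | |f ((T.toEquiv^n) ω) - f ((T.toEquiv^(n-(q:ℤ))) ω)| < ((k:ℝ)^q)⁻¹}) := by
  ext ω
  simp only [Set.mem_iInter, Set.mem_inter_iff, Set.mem_setOf_eq, Finset.mem_Icc, and_imp]
  constructor
  · intro h n h1 h2; exact h n h1 h2
  · intro h n h1 h2; exact h n h1 h2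

lemma isOpen_goodPt_omega (T : Ω ≃ₜ Ω) (f : C(Ω,ℝ)) (k q : ℕ) :
    IsOpen {ω | goodPt T f k q ω} := by
  rw [goodPt_eq_biInter]
  refine isOpen_biInter_finset fun n _ => IsOpen.inter ?_ ?_ <;>
  · exact isOpen_lt (Continuous.abs (((f.continuous.comp (hzpow_cont T _))).sub
      (f.continuous.comp (hzpow_cont T _)))) continuous_const

lemma isOpen_goodPt_f (T : Ω ≃ₜ Ω) (k q : ℕ) (ω : Ω) :
    IsOpen {f : C(Ω,ℝ) | goodPt T f k q ω} := by
  have : {f : C(Ω,ℝ) | goodPt T f k q ω} = ⋂ n ∈ Finset.Icc (1:ℤ) (q:ℤ),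
      ({f : C(Ω,ℝ) | |f ((T.toEquiv^n) ω) - f ((T.toEquiv^(n+(q:ℤ))) ω)| < ((k:ℝ)^q)⁻¹} ∩
       {f : C(Ω,ℝ) | |f ((T.toEquiv^n) ω) - f ((T.toEquiv^(n-(q:ℤ))) ω)| < ((k:ℝ)^q)⁻¹}) := by
    ext f
    simp only [Set.mem_iInter, Set.mem_inter_iff, Set.mem_setOf_eq, Finset.mem_Icc, and_imp]
    constructor
    · intro h n h1 h2; exact h n h1 h2
    · intro h n h1 h2; exact h n h1 h2
  rw [this]
  refine isOpen_biInter_finset fun n _ => IsOpen.inter ?_ ?_ <;>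
  · exact isOpen_lt (Continuous.abs ((continuous_eval_const _).sub
      (continuous_eval_const _))) continuous_const

lemma isOpen_setA (T : Ω ≃ₜ Ω) (k : ℕ) (V : Set Ω) : IsOpen (setA T k V) := by
  have : setA T k V = ⋃ q : ℕ, ⋃ (_ : k ≤ q ∧ 0 < q), ⋃ ω ∈ V,
      {f : C(Ω,ℝ) | goodPt T f k q ω} := by
    ext f
    simp only [setA, Set.mem_setOf_eq, Set.mem_iUnion]
    exact ⟨fun ⟨q,h1,h2,ω,h3,h4⟩ => ⟨q,⟨h1,h2⟩,ω,h3,h4⟩,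
           fun ⟨q,⟨h1,h2⟩,ω,h3,h4⟩ => ⟨q,h1,h2,ω,h3,h4⟩⟩
  rw [this]
  exact isOpen_iUnion fun q => isOpen_iUnion fun _ => isOpen_biUnion
    fun ω _ => isOpen_goodPt_f T k q ω

lemma isOpen_setO (T : Ω ≃ₜ Ω) (f : C(Ω,ℝ)) (k : ℕ) : IsOpen (setO T f k) := by
  have : setO T f k = ⋃ q : ℕ, ⋃ (_ : k ≤ q ∧ 0 < q),
      {ω | goodPt T f k q ω} := by
    ext ω
    simp only [setO, Set.mem_setOf_eq, Set.mem_iUnion]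
    exact ⟨fun ⟨q,h1,h2,h4⟩ => ⟨q,⟨h1,h2⟩,h4⟩,
           fun ⟨q,⟨h1,h2⟩,h4⟩ => ⟨q,h1,h2,h4⟩⟩
  rw [this]
  exact isOpen_iUnion fun q => isOpen_iUnion fun _ => isOpen_goodPt_omega T f k q

lemma orbit_injective {Ω : Type*} [MetricSpace Ω] [Infinite Ω] (T : Ω ≃ₜ Ω)
    (hmin : ∀ ω : Ω, Dense (Set.range fun n : ℤ => (T.toEquiv ^ n) ω)) (ω : Ω) :
    Function.Injective fun n : ℤ => (T.toEquiv ^ n) ω := by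
  intro a b hab
  have hab' : (T.toEquiv ^ a) ω = (T.toEquiv ^ b) ω := hab
  by_contra hne
  set e := T.toEquiv with he
  have key : ∀ p : ℤ, 0 < p → ∀ ω' : Ω, (e ^ p) ω' = ω' → False := by
    intro p hp ω' hfix
    have hper : ∀ n : ℤ, (e ^ (n + p)) ω' = (e ^ n) ω' := by
      intro n; rw [hzpow_add T n p, hfix]
    have hper' : ∀ n : ℤ, (e ^ (n - p)) ω' = (e ^ n) ω' := by
      intro n
      have := hper (n - p); rw [sub_add_cancel] at this; exact this.symm
    have hmod : ∀ n : ℤ, ∀ m : ℤ, (e ^ (n - p * m)) ω' = (e ^ n) ω' := by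
      intro n m
      induction m using Int.induction_on with
      | zero => simp
      | succ i ih =>
          have h2 : n - p * (i + 1) = (n - p * i) - p := by ring
          rw [h2, hper' (n - p * i), ih]
      | pred i ih =>
          have h2 : n - p * (-i - 1) = (n - p * (-i)) + p := by ring
          rw [h2, hper (n - p * (-i)), ih]
    have hsub : (Set.range fun n : ℤ => (e ^ n) ω') ⊆
        (fun n : ℤ => (e ^ n) ω') '' (Set.Ico (0:ℤ) p) := by
      rintro x ⟨n, rfl⟩
      refine ⟨n % p, ⟨Int.emod_nonneg n hp.ne', Int.emod_lt_of_pos n hp⟩, ?_⟩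
      show (e ^ (n % p)) ω' = (e ^ n) ω'
      have h3 : n % p = n - p * (n / p) := by rw [Int.emod_def]
      rw [h3]; exact hmod n (n / p)
    have hfin : ((fun n : ℤ => (e ^ n) ω') '' (Set.Ico (0:ℤ) p)).Finite :=
      (Set.finite_Ico 0 p).image _
    have hfin2 : (Set.range fun n : ℤ => (e ^ n) ω').Finite := hfin.subset hsub
    have hdense := hmin ω'
    have hclosed : IsClosed (Set.range fun n : ℤ => (e ^ n) ω') := hfin2.isClosed
    have huniv : (Set.range fun n : ℤ => (e ^ n) ω') = Set.univ := by
      rw [← hclosed.closure_eq]; exact hdense.closure_eq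
    have : (Set.univ : Set Ω).Finite := huniv ▸ hfin2
    exact (Set.infinite_univ (α := Ω)) this
  rcases lt_or_gt_of_ne hne with h | h
  · refine key (b - a) (by omega) ((e ^ a) ω) ?_
    rw [← hzpow_add, sub_add_cancel, ← hab']
  · refine key (a - b) (by omega) ((e ^ b) ω) ?_
    rw [← hzpow_add, sub_add_cancel, hab']

lemma syndetic_hitting {Ω : Type*} [MetricSpace Ω] [CompactSpace Ω] [Nonempty Ω] (T : Ω ≃ₜ Ω)
    (hmin : ∀ ω : Ω, Dense (Set.range fun n : ℤ => (T.toEquiv ^ n) ω))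
    {V : Set Ω} (hV : IsOpen V) (hVne : V.Nonempty) :
    ∃ L : ℕ, ∀ ω : Ω, ∀ s : ℕ, ∃ j : ℕ, s ≤ j ∧ j ≤ s + L ∧ (T.toEquiv ^ (j:ℤ)) ω ∈ V := by
  set e := T.toEquiv
  have hcover : (Set.univ : Set Ω) ⊆ ⋃ n : ℤ, (fun x => (e ^ n) x) ⁻¹' V := by
    intro x _
    obtain ⟨y, hyV, n, rfl⟩ := (hmin x).inter_open_nonempty V hV hVne
    exact Set.mem_iUnion.mpr ⟨n, hyV⟩
  obtain ⟨s, hs⟩ := isCompact_univ.elim_finite_subcover _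
    (fun n : ℤ => (hV.preimage (hzpow_cont T n))) hcover
  have hsne : s.Nonempty := by
    rcases Set.univ_nonempty (α := Ω) with ⟨x, _⟩
    rcases Set.mem_iUnion₂.mp (hs (Set.mem_univ x)) with ⟨i, hi, _⟩
    exact ⟨i, hi⟩
  set a : ℕ := s.sup fun n => n.natAbs with ha
  refine ⟨2 * a, fun ω st => ?_⟩
  have hx := hs (Set.mem_univ ((e ^ ((st : ℤ) + a)) ω))
  rcases Set.mem_iUnion₂.mp hx with ⟨i, hi, hiV⟩
  have hia : i.natAbs ≤ a := Finset.le_sup hi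
  have hj : (0:ℤ) ≤ i + st + a := by omega
  refine ⟨(i + st + a).toNat, by omega, by omega, ?_⟩
  have : ((((i + st + a).toNat : ℕ)):ℤ) = i + ((st : ℤ) + a) := by omega
  rw [this, hzpow_add]
  exact hiV

lemma dense_setA {Ω : Type*} [MetricSpace Ω] [CompactSpace Ω] [Infinite Ω] (T : Ω ≃ₜ Ω)
    (hmin : ∀ ω : Ω, Dense (Set.range fun n : ℤ => (T.toEquiv ^ n) ω))
    {ω₀ : Ω} (hω₀ : RepetitionProperty fun i => T^[i] ω₀)
    {k : ℕ} (hk : 1 ≤ k) {V : Set Ω} (hV : IsOpen V) (hVne : V.Nonempty) :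
    Dense (setA T k V) := by
  rw [Metric.dense_iff]
  intro f δ hδ
  -- uniform continuity
  obtain ⟨ε₀, hε₀pos, hε₀⟩ := Metric.uniformContinuous_iff.mp
    (CompactSpace.uniformContinuous_of_continuous f.continuous) (δ/4) (by linarith)
  -- syndetic constant
  obtain ⟨L, hL⟩ := syndetic_hitting T hmin hV hVne
  -- injectivity
  have hinj := orbit_injective T hmin ω₀
  set x : ℕ → Ω := fun i => T^[i] ω₀ with hx
  have hxinj : ∀ i i' : ℕ, i ≠ i' → x i ≠ x i' := by
    intro i i' hne heq
    apply hne
    have : ((i:ℤ)) = ((i':ℤ)) := by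
      apply hinj
      show (T.toEquiv ^ (i:ℤ)) ω₀ = (T.toEquiv ^ (i':ℤ)) ω₀
      rw [hzpow_nat, hzpow_nat]; exact heq
    exact_mod_cast this
  -- minimal distance to first k iterates
  have hIcc : (Finset.Icc 1 k).Nonempty := ⟨1, by simp [hk]⟩
  set D : ℝ := (Finset.Icc 1 k).inf' hIcc (fun p => dist ω₀ (x p)) with hD
  have hDpos : 0 < D := by
    rw [hD, Finset.lt_inf'_iff]
    intro p hp
    refine dist_pos.mpr ?_
    have : (0:ℕ) ≠ p := by simp at hp; omega
    simpa [hx] using hxinj 0 p this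
  set ε' : ℝ := min ε₀ D / 2 with hε'
  have hε'pos : 0 < ε' := by positivity
  -- repetition property
  obtain ⟨q, hq0, H⟩ := hω₀ ε' hε'pos ((L:ℝ)+3) (by positivity)
  have hfloor : ⌊((L:ℝ)+3) * q⌋₊ = (L+3)*q := by
    have : ((L:ℝ)+3) * (q:ℝ) = (((L+3)*q : ℕ) : ℝ) := by push_cast; ring
    rw [this, Nat.floor_natCast]
  have Hq : ∀ i : ℕ, i ≤ (L+3)*q → dist (x i) (x (i+q)) < ε' := by
    intro i hi; exact H i (by rwa [hfloor])
  -- q > k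
  have hkq : k < q := by
    by_contra hle
    push_neg at hle
    have hq1 : q ∈ Finset.Icc 1 k := by simp; omega
    have h1 : D ≤ dist ω₀ (x q) := Finset.inf'_le _ hq1
    have h2 : dist ω₀ (x q) < ε' := by
      have := Hq 0 (Nat.zero_le _)
      simpa [hx] using this
    have : ε' < D := by
      rw [hε']
      have : min ε₀ D ≤ D := min_le_right _ _
      linarith
    linarith
  -- hitting time
  obtain ⟨j, hjq, hjL, hjV⟩ := hL ω₀ q
  rw [hzpow_nat] at hjV
  -- window
  set b : ℕ := j + 1 - q with hb
  have hbq : b + q = j + 1 := by omega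
  set I : Finset ℕ := Finset.Icc b (j + 2*q) with hI
  -- periodized values
  set c : ℕ → ℝ := fun i => f (x (b + (i - b) % q)) with hc
  have R1 : ∀ i : ℕ, b ≤ i → c (i + q) = c i := by
    intro i hi
    rw [hc]
    have : i + q - b = (i - b) + q := by omega
    simp only [this, Nat.add_mod_right]
  have h5 : j + 2*q ≤ (L+3)*q := by
    have h6 : (L+3)*q = L*q+3*q := by ring
    have h7 : L ≤ L * q := Nat.le_mul_of_pos_right L hq0
    omega
  -- chain estimate
  have chain : ∀ i ∈ I, dist (x i) (x (b + (i - b) % q)) < 2 * ε' := by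
    intro i hi
    rw [hI, Finset.mem_Icc] at hi
    set m : ℕ := i - b with hm
    have him : i = b + m := by omega
    have hm3 : m < 3 * q := by omega
    have ht : m / q < 3 := by
      rw [Nat.div_lt_iff_lt_mul hq0]; omega
    have hdm : q * (m / q) + m % q = m := Nat.div_add_mod m q
    have hmodlt : m % q < q := Nat.mod_lt _ hq0
    interval_cases h : (m / q)
    · have : m % q = m := by omega
      rw [him, this]
      simpa using (by positivity : (0:ℝ) < 2 * ε')
    · have h1 : i = (b + m % q) + q := by omega
      have := Hq (b + m % q) (by omega)
      rw [h1]
      rw [dist_comm]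
      linarith
    · have h1 : i = ((b + m % q) + q) + q := by omega
      have e1 := Hq (b + m % q) (by omega)
      have e2 := Hq ((b + m % q) + q) (by omega)
      rw [h1]
      have tri := dist_triangle (x (b + m % q + q + q)) (x (b + m % q + q)) (x (b + m % q))
      rw [dist_comm (x (b + m % q + q + q)) (x (b + m % q + q)),
          dist_comm (x (b + m % q + q)) (x (b + m % q))] at tri
      linarith
  have Hfc : ∀ i ∈ I, |f (x i) - c i| < δ/4 := by
    intro i hi
    have h1 := chain i hi
    have h2 : dist (x i) (x (b + (i - b) % q)) < ε₀ := by
      have : 2 * ε' ≤ ε₀ := by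
        rw [hε']
        have := min_le_left ε₀ D
        linarith
      linarith
    have := hε₀ h2
    rw [Real.dist_eq] at this
    exact this
  -- pairwise distances
  have hiton : ∀ i ∈ I, ∀ i' ∈ I, i ≠ i' → x i ≠ x i' := fun i _ i' _ hne => hxinj i i' hne
  set P : Finset (ℕ × ℕ) := (I ×ˢ I).filter (fun p => p.1 ≠ p.2) with hP
  have hPne : P.Nonempty := by
    refine ⟨(b, b+1), ?_⟩
    rw [hP, Finset.mem_filter]
    constructor
    · rw [Finset.mem_product, hI]
      constructor <;> (rw [Finset.mem_Icc]; omega)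
    · exact (by omega : b ≠ b + 1)
  set mp : ℝ := P.inf' hPne (fun p => dist (x p.1) (x p.2)) with hmp
  have hmppos : 0 < mp := by
    rw [hmp, Finset.lt_inf'_iff]
    rintro ⟨i, i'⟩ hp
    rw [hP, Finset.mem_filter, Finset.mem_product] at hp
    exact dist_pos.mpr (hxinj i i' hp.2)
  have hmple : ∀ i ∈ I, ∀ i' ∈ I, i ≠ i' → mp ≤ dist (x i) (x i') := by
    intro i hi i' hi' hne
    have hmem : (i, i') ∈ P := by
      rw [hP, Finset.mem_filter, Finset.mem_product]
      exact ⟨⟨hi, hi'⟩, hne⟩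
    exact Finset.inf'_le _ hmem
  set ρ : ℝ := min ε₀ (mp/2) with hρ
  have hρpos : 0 < ρ := by positivity
  have hρε₀ : ρ ≤ ε₀ := min_le_left _ _
  have hρmp : 2 * ρ ≤ mp := by
    have := min_le_right ε₀ (mp/2)
    linarith
  -- bump functions
  set φ : ℕ → Ω → ℝ := fun i y => max 0 (min 1 (2 - 3 * dist y (x i) / ρ)) with hφ
  have hφ01 : ∀ i y, 0 ≤ φ i y ∧ φ i y ≤ 1 := by
    intro i y
    exact ⟨le_max_left _ _, max_le (by norm_num) (min_le_left _ _)⟩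
  have hφ1 : ∀ i, φ i (x i) = 1 := by
    intro i
    rw [hφ]
    simp only [dist_self]
    norm_num
  have hφz : ∀ i y, 2*ρ/3 ≤ dist y (x i) → φ i y = 0 := by
    intro i y hy
    rw [hφ]
    simp only
    have h1 : 2 - 3 * dist y (x i) / ρ ≤ 0 := by
      rw [sub_nonpos, le_div_iff₀ hρpos]
      linarith
    have : min 1 (2 - 3 * dist y (x i) / ρ) ≤ 0 := le_trans (min_le_right _ _) h1
    exact max_eq_left this
  have hφsupp : ∀ i y, φ i y ≠ 0 → dist y (x i) < 2*ρ/3 := by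
    intro i y hne
    by_contra hge
    push_neg at hge
    exact hne (hφz i y hge)
  have hφcont : ∀ i, Continuous (φ i) := by
    intro i
    apply Continuous.max continuous_const
    apply Continuous.min continuous_const
    exact continuous_const.sub (((continuous_const.mul
      (continuous_id.dist continuous_const))).div_const ρ)
  -- perturbed function
  set g : C(Ω, ℝ) := ⟨fun y => f y + ∑ i ∈ I, φ i y * (c i - f y),
    f.continuous.add (continuous_finset_sum I fun i _ =>
      (hφcont i).mul (continuous_const.sub f.continuous))⟩ with hg
  have hgval : ∀ y, g y = f y + ∑ i ∈ I, φ i y * (c i - f y) := fun y => rfl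
  -- values at centers
  have hgc : ∀ i' ∈ I, g (x i') = c i' := by
    intro i' hi'
    rw [hgval]
    have hsum : ∑ i ∈ I, φ i (x i') * (c i - f (x i')) = c i' - f (x i') := by
      rw [Finset.sum_eq_single_of_mem i' hi']
      · rw [hφ1]; ring
      · intro i hi hne
        have hzz : φ i (x i') = 0 := by
          apply hφz
          have hmp2 := hmple i' hi' i hi (Ne.symm hne)
          linarith
        rw [hzz]; ring
    rw [hsum]; ring
  -- uniform bound
  have hgf : ∀ y : Ω, |g y - f y| ≤ δ/2 := by
    intro y
    rw [hgval]
    have heq : f y + ∑ i ∈ I, φ i y * (c i - f y) - f y = ∑ i ∈ I, φ i y * (c i - f y) := by ring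
    rw [heq]
    by_cases hex : ∃ i ∈ I, φ i y * (c i - f y) ≠ 0
    · obtain ⟨i₀, hi₀, hi₀ne⟩ := hex
      have hφi₀ : φ i₀ y ≠ 0 := fun h => hi₀ne (by rw [h]; ring)
      have hdy₀ : dist y (x i₀) < 2*ρ/3 := hφsupp i₀ y hφi₀
      have hsum : ∑ i ∈ I, φ i y * (c i - f y) = φ i₀ y * (c i₀ - f y) := by
        apply Finset.sum_eq_single_of_mem i₀ hi₀
        intro i hi hne
        have hz : φ i y = 0 := by
          apply hφz
          by_contra hlt
          push_neg at hlt
          have hd := hmple i hi i₀ hi₀ hne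
          have tri := dist_triangle (x i) y (x i₀)
          rw [dist_comm (x i) y] at tri
          linarith
        rw [hz]; ring
      rw [hsum]
      have h1 : |φ i₀ y * (c i₀ - f y)| ≤ |c i₀ - f y| := by
        rw [abs_mul]
        have h2 := (hφ01 i₀ y).1
        have h3 := (hφ01 i₀ y).2
        have : |φ i₀ y| = φ i₀ y := abs_of_nonneg h2
        rw [this]
        nlinarith [abs_nonneg (c i₀ - f y)]
      have h4 : |c i₀ - f y| ≤ |c i₀ - f (x i₀)| + |f (x i₀) - f y| := by
        have : c i₀ - f y = (c i₀ - f (x i₀)) + (f (x i₀) - f y) := by ring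
        rw [this]; exact abs_add_le _ _
      have h5 : |c i₀ - f (x i₀)| < δ/4 := by
        have := Hfc i₀ hi₀
        rw [abs_sub_comm] at this
        exact this
      have h6 : |f (x i₀) - f y| < δ/4 := by
        have hd : dist (x i₀) y < ε₀ := by
          rw [dist_comm]
          linarith
        have := hε₀ hd
        rw [Real.dist_eq] at this
        exact this
      linarith
    · push_neg at hex
      have hsum : ∑ i ∈ I, φ i y * (c i - f y) = 0 :=
        Finset.sum_eq_zero fun i hi => hex i hi
      rw [hsum]
      simp
      linarith
  -- g is in the ball
  have hball : g ∈ Metric.ball f δ := by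
    rw [Metric.mem_ball]
    have : dist g f ≤ δ/2 := by
      rw [ContinuousMap.dist_le (by linarith)]
      intro y
      rw [Real.dist_eq]
      exact hgf y
    linarith
  -- g is in setA
  refine ⟨g, hball, q, le_of_lt hkq, hq0, x j, hjV, ?_⟩
  intro n h1 h2
  set m : ℕ := n.toNat with hmdef
  have hmn : (m : ℤ) = n := Int.toNat_of_nonneg (by omega)
  have hm1 : 1 ≤ m := by omega
  have hmq : m ≤ q := by omega
  have hgen : ∀ s : ℤ, 0 ≤ s + (j:ℤ) → (T.toEquiv ^ s) (x j) = x ((s + (j:ℤ)).toNat) := by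
    intro s hs
    have h1 : x j = (T.toEquiv ^ (j:ℤ)) ω₀ := (hzpow_nat T j ω₀).symm
    rw [h1, ← hzpow_add]
    have h2 : ((((s + (j:ℤ)).toNat : ℕ)) : ℤ) = s + j := Int.toNat_of_nonneg hs
    conv_lhs => rw [← h2]
    rw [hzpow_nat]
  have e1 : (T.toEquiv ^ n) (x j) = x (j + m) := by
    rw [hgen n (by omega)]
    congr 1
    omega
  have e2 : (T.toEquiv ^ (n + (q:ℤ))) (x j) = x (j + m + q) := by
    rw [hgen (n + (q:ℤ)) (by omega)]
    congr 1
    omega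
  have e3 : (T.toEquiv ^ (n - (q:ℤ))) (x j) = x (j + m - q) := by
    rw [hgen (n - (q:ℤ)) (by omega)]
    congr 1
    omega
  have mem1 : j + m ∈ I := by rw [hI, Finset.mem_Icc]; omega
  have mem2 : j + m + q ∈ I := by rw [hI, Finset.mem_Icc]; omega
  have mem3 : j + m - q ∈ I := by rw [hI, Finset.mem_Icc]; omega
  have v1 : g ((T.toEquiv ^ n) (x j)) = c (j + m) := by rw [e1]; exact hgc _ mem1
  have v2 : g ((T.toEquiv ^ (n + (q:ℤ))) (x j)) = c (j + m + q) := by rw [e2]; exact hgc _ mem2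
  have v3 : g ((T.toEquiv ^ (n - (q:ℤ))) (x j)) = c (j + m - q) := by rw [e3]; exact hgc _ mem3
  have ceq1 : c (j + m + q) = c (j + m) := R1 (j + m) (by omega)
  have ceq2 : c (j + m - q) = c (j + m) := by
    have := R1 (j + m - q) (by omega)
    have h7 : j + m - q + q = j + m := by omega
    rw [h7] at this
    exact this.symm
  have hpos : (0:ℝ) < ((k:ℝ)^q)⁻¹ := by
    have : (0:ℝ) < (k:ℝ) := by exact_mod_cast hk
    positivity
  constructor
  · rw [v1, v2, ceq1]
    simpa using hpos
  · rw [v1, v3, ceq2]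
    simpa using hpos

end Auxiliary

/-- **Theorem 1 (topological version).** If the minimal homeomorphism `T` of the infinite
compact metric space `Ω` satisfies (TRP), then for a residual set of `f ∈ C(Ω, ℝ)` there
is a residual set of `ω ∈ Ω` such that `n ↦ f (Tⁿ ω)` is a Gordon potential. -/
theorem generic_gordon_of_TRP {Ω : Type*} [MetricSpace Ω] [CompactSpace Ω] [Infinite Ω]
    (T : Ω ≃ₜ Ω)
    (hmin : ∀ ω : Ω, Dense (Set.range fun n : ℤ => (T.toEquiv ^ n) ω))
    (hTRP : (PRP (⇑T)).Nonempty) :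
    ∃ F ∈ residual C(Ω, ℝ), ∀ f ∈ F, ∃ Ωf ∈ residual Ω, ∀ ω ∈ Ωf,
      IsGordonPotential fun n : ℤ => f ((T.toEquiv ^ n) ω) := by
  obtain ⟨ω₀, hω₀⟩ := hTRP
  have hω₀' : RepetitionProperty fun i => T^[i] ω₀ := hω₀
  obtain ⟨B, hBcount, hBempty, hBbasis⟩ := TopologicalSpace.exists_countable_basis Ω
  have hBne : ∀ V ∈ B, V.Nonempty := by
    intro V hV
    rcases Set.eq_empty_or_nonempty V with h | h
    · exact absurd (h ▸ hV) hBempty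
    · exact h
  -- the residual set of functions
  refine ⟨⋂ k : ℕ, ⋂ V ∈ B, setA T (k+1) V, ?_, ?_⟩
  · refine countable_iInter_mem.mpr fun k => ?_
    refine (countable_bInter_mem hBcount).mpr fun V hVB => ?_
    exact residual_of_dense_open (isOpen_setA T (k+1) V)
      (dense_setA T hmin hω₀' (Nat.succ_le_succ (Nat.zero_le k))
        (hBbasis.isOpen hVB) (hBne V hVB))
  intro f hf
  have hfA : ∀ k : ℕ, ∀ V ∈ B, f ∈ setA T (k+1) V := by
    intro k V hVB
    have := Set.mem_iInter.mp hf k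
    exact Set.mem_iInter₂.mp this V hVB
  -- the residual set of points
  have hOdense : ∀ k : ℕ, Dense (setO T f (k+1)) := by
    intro k
    rw [hBbasis.dense_iff]
    intro o ho hone
    obtain ⟨q, hq1, hq2, ω, hωo, hgood⟩ := hfA k o ho
    exact ⟨ω, hωo, q, hq1, hq2, hgood⟩
  refine ⟨⋂ k : ℕ, setO T f (k+1), ?_, ?_⟩
  · refine countable_iInter_mem.mpr fun k => ?_
    exact residual_of_dense_open (isOpen_setO T f (k+1)) (hOdense k)
  intro ω hω
  have hO : ∀ k : ℕ, 1 ≤ k → ∃ q : ℕ, k ≤ q ∧ 0 < q ∧ goodPt T f k q ω := by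
    intro k hk
    have := Set.mem_iInter.mp hω (k - 1)
    have hk1 : k - 1 + 1 = k := by omega
    rw [hk1] at this
    exact this
  constructor
  · exact ⟨‖f‖, fun n => by
      rw [← Real.norm_eq_abs]
      exact f.norm_coe_le_norm _⟩
  · refine ⟨fun k => if h : 1 ≤ k then (hO k h).choose else 1, fun k => ?_, ?_, ?_⟩
    · by_cases h : 1 ≤ k
      · simp only [dif_pos h]; exact (hO k h).choose_spec.2.1
      · simp only [dif_neg h]; norm_num
    · refine tendsto_atTop_mono' atTop ?_ tendsto_id
      filter_upwards [eventually_ge_atTop 1] with k hk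
      simp only [id_eq, dif_pos hk]
      exact (hO k hk).choose_spec.1
    · intro k hk n h1 h2
      simp only [dif_pos hk] at h2 ⊢
      have hg := (hO k hk).choose_spec.2.2 n h1 h2
      exact ⟨le_of_lt hg.1, le_of_lt hg.2⟩
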